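/- The polynomial S_k(y) = ∑_{h=0}^{ℓ'} (-1)^h C(ℓ,h) (∑_{j=0}^{h} (-1)^j C(h,j) K_{2j}(k)) y^h, written in the basis {(1-2y)^j}, has all nonnegative coefficients when k is even, and equals (1-2y) times a polynomial in (1-2y)^2 with nonnegative coefficients when k is odd. Consequently, for each k with 0 ≤ k ≤ 2ℓ-1, the ratio S_{k+1}(y)/S_k(y) is nonnegative for y ∈ [0,1/2) and nonpositive for y ∈ (1/2,1]. -/

import Mathlib

/-- Pochhammer (rising factorial) symbol `(a)_n = a(a+1)⋯(a+n-1)`. -/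
noncomputable def poch (a : ℝ) (n : ℕ) : ℝ := ∏ i ∈ Finset.range n, (a + i)

/-- Krawtchouk polynomial `K_n(x; 1/2, N)`. -/
noncomputable def kraw (N : ℕ) (n : ℕ) (x : ℝ) : ℝ :=
  ∑ i ∈ Finset.range (n + 1),
    poch (-(n : ℝ)) i * poch (-x) i / (poch (-(N : ℝ)) i * (Nat.factorial i)) * 2 ^ i

/-- `S_k(y) = (Ψ₀)_{k,ℓ}(y) = ∑_{h=0}^{ℓ} (-1)^h C(ℓ,h) (∑_{j=0}^{h} (-1)^j C(h,j) K_{2j}(k)) y^h`. -/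
noncomputable def Scol (ℓ k : ℕ) (y : ℝ) : ℝ :=
  ∑ h ∈ Finset.range (ℓ + 1),
    ((-1 : ℝ) ^ h * (ℓ.choose h) *
        ∑ j ∈ Finset.range (h + 1), (-1 : ℝ) ^ j * (h.choose j) * kraw (2 * ℓ) (2 * j) k) * y ^ h

lemma poch_zero (a : ℝ) : poch a 0 = 1 := by simp [poch]

lemma poch_succ (a : ℝ) (n : ℕ) : poch a (n + 1) = poch a n * (a + n) := by
  simp [poch, Finset.prod_range_succ]

lemma poch_succ' (a : ℝ) (n : ℕ) : poch a (n + 1) = a * poch (a + 1) n := by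
  rw [poch, Finset.prod_range_succ']
  simp only [Nat.cast_zero, add_zero]
  rw [mul_comm, poch]
  congr 1
  apply Finset.prod_congr rfl
  intro i _
  push_cast
  ring

lemma poch_shift (a : ℝ) (n : ℕ) : poch (a - 1) (n + 1) = (a - 1) * poch a n := by
  rw [poch_succ' (a-1) n]
  ring_nf

lemma poch_neg_nat_ne_zero (N m : ℕ) (h : m ≤ N) : poch (-(N:ℝ)) m ≠ 0 := by
  rw [poch]
  apply Finset.prod_ne_zero_iff.mpr
  intro i hi
  simp only [Finset.mem_range] at hi
  have : i < N := lt_of_lt_of_le hi h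
  have : (i:ℝ) < N := by exact_mod_cast this
  intro hc
  nlinarith

/-- termwise coefficient `A i` -/
noncomputable def Acoef (N n i : ℕ) : ℝ :=
  poch (-(n:ℝ)) i * 2 ^ i / (poch (-(N:ℝ)) i * (Nat.factorial i))

lemma kraw_eq (N n : ℕ) (x : ℝ) :
    kraw N n x = ∑ i ∈ Finset.range (n + 1), Acoef N n i * poch (-x) i := by
  apply Finset.sum_congr rfl
  intro i _
  rw [Acoef]
  ring

lemma Acoef_ratio (N n m : ℕ) (hm : m < N) :
    Acoef N n (m+1) * (m+1) * ((N:ℝ) - m) = 2 * ((n:ℝ) - m) * Acoef N n m := by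
  have h1 : poch (-(N:ℝ)) m ≠ 0 := poch_neg_nat_ne_zero N m hm.le
  have h2 : ((-(N:ℝ)) + m) ≠ 0 := by
    have : (m:ℝ) < N := by exact_mod_cast hm
    intro hc; linarith
  have h3 : (Nat.factorial m : ℝ) ≠ 0 := by exact_mod_cast Nat.factorial_ne_zero m
  rw [Acoef, Acoef, poch_succ, poch_succ, Nat.factorial_succ]
  push_cast
  field_simp
  ring

/-- Difference equation in the variable `x` for Krawtchouk polynomials (p = 1/2). -/
lemma kraw_diff (N n : ℕ) (hn : n ≤ N) (x : ℝ) :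
    ((N:ℝ) - x) * kraw N n (x+1) + x * kraw N n (x-1) = ((N:ℝ) - 2*n) * kraw N n x := by
  rw [kraw_eq, kraw_eq, kraw_eq, Finset.mul_sum, Finset.mul_sum, Finset.mul_sum]
  rw [← sub_eq_zero, ← Finset.sum_add_distrib, ← Finset.sum_sub_distrib]
  set T : ℕ → ℝ := fun m => 2 * ((n:ℝ) - m) * Acoef N n m * poch (-x) m with hT
  have key : ∀ m ∈ Finset.range n,
      (((N:ℝ) - x) * (Acoef N n (m+1) * poch (-(x+1)) (m+1)) +
        x * (Acoef N n (m+1) * poch (-(x-1)) (m+1)) -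
        ((N:ℝ) - 2*n) * (Acoef N n (m+1) * poch (-x) (m+1)))
      = T (m+1) - T m := by
    intro m hm
    have hmN : m < N := lt_of_lt_of_le (Finset.mem_range.mp hm) hn
    have hr := Acoef_ratio N n m hmN
    have e1 : poch (-(x+1)) (m+1) = (-x - 1) * poch (-x) m := by
      have := poch_shift (-x) m
      rw [show -(x+1) = -x - 1 by ring]
      rw [this]
    have e2 : x * poch (-(x-1)) (m+1) = - (poch (-x) m * (-x + m) * (-x + (m+1))) := by
      have h1 : poch (-x) (m+2) = (-x) * poch (-x + 1) (m+1) := by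
        have := poch_succ' (-x) (m+1); rw [this]
      have h2 : poch (-x) (m+2) = poch (-x) m * (-x + m) * (-x + (m+1)) := by
        rw [poch_succ, poch_succ]; push_cast; ring
      rw [show -(x-1) = -x + 1 by ring]
      nlinarith [h1, h2]
    have e3 : poch (-x) (m+1) = poch (-x) m * (-x + m) := by
      rw [poch_succ]
    rw [e1, e3, hT]
    push_cast
    push_cast at hr
    linear_combination (-(poch (-x) m)) * hr + (Acoef N n (m+1)) * e2 + (2*(1+(m:ℝ)-n) * Acoef N n (m+1)) * e3
  rw [Finset.sum_range_succ' _ n, Finset.sum_congr rfl key, Finset.sum_range_sub T n]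
  have hA0 : Acoef N n 0 = 1 := by simp [Acoef, poch_zero]
  have hTn : T n = 0 := by rw [hT]; simp
  have hT0 : T 0 = 2 * n := by rw [hT]; simp [hA0, poch_zero]
  rw [hTn, hT0]
  simp [hA0, poch_zero]
/-- swap lemma: Scol as a positive-kernel sum of even Krawtchouk polynomials -/
lemma Scol_eq (ℓ k : ℕ) (y : ℝ) :
    Scol ℓ k y = ∑ j ∈ Finset.range (ℓ+1),
      (ℓ.choose j : ℝ) * y^j * (1-y)^(ℓ-j) * kraw (2*ℓ) (2*j) (k:ℝ) := by
  rw [Scol]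
  have lhs_eq : ∀ h ∈ Finset.range (ℓ+1),
      ((-1 : ℝ) ^ h * (ℓ.choose h) *
        ∑ j ∈ Finset.range (h + 1), (-1 : ℝ) ^ j * (h.choose j) * kraw (2 * ℓ) (2 * j) k) * y ^ h
      = ∑ j ∈ Finset.range (h+1),
          ((-1:ℝ)^h * (ℓ.choose h) * ((-1:ℝ)^j * (h.choose j) * kraw (2*ℓ) (2*j) k) * y^h) := by
    intro h _
    rw [Finset.mul_sum, Finset.sum_mul]
  rw [Finset.sum_congr rfl lhs_eq]
  have swap : ∑ h ∈ Finset.range (ℓ+1), ∑ j ∈ Finset.range (h+1),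
        ((-1:ℝ)^h * (ℓ.choose h) * ((-1:ℝ)^j * (h.choose j) * kraw (2*ℓ) (2*j) k) * y^h)
      = ∑ j ∈ Finset.range (ℓ+1), ∑ h ∈ Finset.Ico j (ℓ+1),
        ((-1:ℝ)^h * (ℓ.choose h) * ((-1:ℝ)^j * (h.choose j) * kraw (2*ℓ) (2*j) k) * y^h) := by
    have := Finset.sum_Ico_Ico_comm 0 (ℓ+1)
      (fun j h => ((-1:ℝ)^h * (ℓ.choose h) * ((-1:ℝ)^j * (h.choose j) * kraw (2*ℓ) (2*j) k) * y^h))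
    simp only [← Finset.range_eq_Ico] at this
    rw [← this]
  rw [swap]
  apply Finset.sum_congr rfl
  intro j hj
  have hjl : j ≤ ℓ := by simpa [Nat.lt_succ_iff] using hj
  rw [Finset.sum_Ico_eq_sum_range]
  have expand : (1-y)^(ℓ-j) = ∑ t ∈ Finset.range (ℓ+1-j), (-y)^t * (ℓ-j).choose t := by
    have : (1-y)^(ℓ-j) = ((-y) + 1)^(ℓ-j) := by ring_nf
    rw [this, add_pow]
    rw [show ℓ - j + 1 = ℓ + 1 - j by omega]
    apply Finset.sum_congr rfl
    intro t _
    simp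
  rw [expand, Finset.mul_sum, Finset.sum_mul]
  apply Finset.sum_congr rfl
  intro t ht
  have htl : t ≤ ℓ - j := by simp only [Finset.mem_range] at ht; omega
  have hch : (ℓ.choose (j+t)) * ((j+t).choose j) = (ℓ.choose j) * ((ℓ-j).choose t) := by
    have := Nat.choose_mul (n := ℓ) (show j ≤ j + t by omega)
    rw [this]
    congr 2
    omega
  have hsgn : ((-1:ℝ))^(j+t) * (-1:ℝ)^j = (-1:ℝ)^t := by
    rw [pow_add, mul_comm ((-1:ℝ)^j), mul_assoc, ← pow_add]
    have : ((-1:ℝ))^(j+j) = 1 := Even.neg_one_pow ⟨j, by omega⟩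
    rw [this, mul_one]
  have hchR : ((ℓ.choose (j+t)) : ℝ) * (((j+t).choose j) : ℝ) = (ℓ.choose j : ℝ) * ((ℓ-j).choose t : ℝ) := by
    exact_mod_cast congrArg (Nat.cast : ℕ → ℝ) hch
  calc (-1:ℝ)^(j+t) * (ℓ.choose (j+t)) * ((-1:ℝ)^j * ((j+t).choose j) * kraw (2*ℓ) (2*j) k) * y^(j+t)
      = ((-1:ℝ)^(j+t) * (-1:ℝ)^j) * ((ℓ.choose (j+t) : ℝ) * ((j+t).choose j)) * kraw (2*ℓ) (2*j) k * y^(j+t) := by ring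
    _ = (-1:ℝ)^t * ((ℓ.choose j : ℝ) * ((ℓ-j).choose t)) * kraw (2*ℓ) (2*j) k * y^(j+t) := by rw [hsgn, hchR]
    _ = (ℓ.choose j : ℝ) * y^j * ((-y)^t * ((ℓ-j).choose t)) * kraw (2*ℓ) (2*j) k := by
        rw [pow_add, neg_pow]; ring

lemma kraw_zero (N n : ℕ) : kraw N n 0 = 1 := by
  rw [kraw]
  rw [Finset.sum_eq_single 0]
  · simp [poch_zero]
  · intro i _ hi
    obtain ⟨m, rfl⟩ := Nat.exists_eq_succ_of_ne_zero hi
    have : poch (-(0:ℝ)) (m+1) = 0 := by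
      rw [show -(0:ℝ) = 0 by ring, poch_succ']
      ring
    rw [this]
    ring
  · intro h
    simp at h

lemma kraw_one (N n : ℕ) (hN : 0 < N) : kraw N n 1 = 1 - 2*n/N := by
  have hNne : (N:ℝ) ≠ 0 := by positivity
  rw [kraw]
  have hz : ∀ i ∈ Finset.range (n+1), i ∉ ({0, 1} : Finset ℕ) →
      poch (-(n:ℝ)) i * poch (-(1:ℝ)) i / (poch (-(N:ℝ)) i * (Nat.factorial i)) * 2 ^ i = 0 := by
    intro i _ hi
    simp only [Finset.mem_insert, Finset.mem_singleton] at hi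
    push_neg at hi
    obtain ⟨h0, h1⟩ := hi
    obtain ⟨m, rfl⟩ := Nat.exists_eq_succ_of_ne_zero h0
    have hm : m ≠ 0 := by intro h; apply h1; rw [h]
    obtain ⟨p, rfl⟩ := Nat.exists_eq_succ_of_ne_zero hm
    have : poch (-(1:ℝ)) (p+1+1) = 0 := by
      rw [poch_succ', show -(1:ℝ)+1 = 0 by ring, poch_succ']
      ring
    rw [this]
    ring
  cases n with
  | zero =>
    simp only [Nat.cast_zero]
    rw [Finset.sum_range_one]
    simp [poch_zero]
  | succ m =>
    rw [← Finset.sum_subset (show ({0,1} : Finset ℕ) ⊆ Finset.range (m+1+1) by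
        intro i hi
        simp only [Finset.mem_insert, Finset.mem_singleton] at hi
        simp only [Finset.mem_range]
        omega) (by intro i hi hni; exact hz i hi hni)]
    rw [Finset.sum_insert (by simp), Finset.sum_singleton]
    simp only [poch_zero]
    simp only [show ∀ a : ℝ, poch a 1 = poch a 0 * (a + ((0:ℕ):ℝ)) from fun a => poch_succ a 0]
    simp [poch_zero, Nat.factorial]
    have hinv : (N:ℝ) * (N:ℝ)⁻¹ = 1 := mul_inv_cancel₀ hNne
    field_simp
    linear_combination
section BCoef

/-- Coefficients of `S_k` in the basis `(1-2y)^r`. -/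
noncomputable def bcoef (ℓ k r : ℕ) : ℝ :=
  if r % 2 = k % 2 ∧ r ≤ k ∧ k + r ≤ 2 * ℓ then
    ((ℓ.factorial : ℝ) * k.factorial * (2*ℓ - k).factorial * 2^r) /
      ((2*ℓ).factorial * r.factorial * ((k - r)/2).factorial * ((2*ℓ - k - r)/2).factorial)
  else 0

lemma bcoef_nonneg (ℓ k r : ℕ) : 0 ≤ bcoef ℓ k r := by
  rw [bcoef]
  split
  · positivity
  · exact le_refl 0

lemma bcoef_zero_of_gt (ℓ k r : ℕ) (h : k < r) : bcoef ℓ k r = 0 := by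
  rw [bcoef, if_neg]; rintro ⟨-, h2, -⟩; omega

lemma bcoef_zero_of_sum (ℓ k r : ℕ) (h : 2*ℓ < k + r) : bcoef ℓ k r = 0 := by
  rw [bcoef, if_neg]; rintro ⟨-, -, h3⟩; omega

lemma bcoef_zero_parity (ℓ k r : ℕ) (h : ¬ (r % 2 = k % 2)) : bcoef ℓ k r = 0 := by
  rw [bcoef, if_neg]; rintro ⟨h1, -, -⟩; exact h h1

lemma bcoef_val (ℓ k r a c : ℕ) (hk : k = r + 2*a) (hl : 2*ℓ = k + r + 2*c) :
    bcoef ℓ k r = ((ℓ.factorial : ℝ) * (r+2*a).factorial * (r+2*c).factorial * 2^r) /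
      ((2*ℓ).factorial * r.factorial * a.factorial * c.factorial) := by
  rw [bcoef, if_pos]
  · rw [show k = r + 2*a from hk]
    rw [show 2*ℓ - (r + 2*a) = r + 2*c by omega]
    rw [show (r + 2*a - r)/2 = a by omega]
    rw [show (r + 2*c - r)/2 = c by omega]
  · refine ⟨by omega, by omega, by omega⟩

end BCoef
lemma fact1R (n : ℕ) : (((n+1).factorial : ℕ) : ℝ) = ((n:ℝ)+1) * (n.factorial : ℝ) := by
  rw [Nat.factorial_succ]; push_cast; ring

lemma factR_ne (n : ℕ) : ((n.factorial : ℕ) : ℝ) ≠ 0 := by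
  exact_mod_cast Nat.factorial_ne_zero n

lemma key0 (ℓ m : ℕ) (h : m + 2 ≤ 2*ℓ) :
    (2*(ℓ:ℝ) - ((m:ℝ)+1)) * bcoef ℓ (m+2) 0 + ((m:ℝ)+1) * bcoef ℓ m 0
      = 2 * bcoef ℓ (m+1) 1 := by
  by_cases hpar : m % 2 = 0
  · -- m even
    obtain ⟨a, rfl⟩ : ∃ a, m = 2*a := ⟨m/2, by omega⟩
    obtain ⟨c, hc⟩ : ∃ c, 2*ℓ = (2*a+2) + 0 + 2*c := ⟨(2*ℓ - 2*a - 2)/2, by omega⟩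
    have hl : ℓ = a + 1 + c := by omega
    subst hl
    rw [bcoef_val _ _ 0 (a+1) c (by omega) (by omega)]
    rw [bcoef_val _ _ 0 a (c+1) (by omega) (by omega)]
    rw [bcoef_val _ _ 1 a c (by omega) (by omega)]
    rw [show 0 + 2*(a+1) = (2*a+1)+1 by ring, show 0+2*c = 2*c by ring,
        show 0+2*a = 2*a by ring, show 0+2*(c+1) = (2*c+1)+1 by ring,
        show 1+2*a = 2*a+1 by ring, show 1+2*c = 2*c+1 by ring]
    rw [fact1R (2*a+1), fact1R (2*a), fact1R (2*c+1), fact1R (2*c), fact1R a, fact1R c]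
    rw [show (0:ℕ).factorial = 1 from rfl, show (1:ℕ).factorial = 1 from rfl]
    have n1 := factR_ne (2*(a+1+c))
    have n2 := factR_ne a
    have n3 := factR_ne c
    have n4 := factR_ne (2*a)
    have n5 := factR_ne (2*c)
    push_cast
    field_simp
    ring
  · -- m odd : all terms vanish by parity
    rw [bcoef_zero_parity ℓ (m+2) 0 (by omega), bcoef_zero_parity ℓ m 0 (by omega),
        bcoef_zero_parity ℓ (m+1) 1 (by omega)]
    ring

lemma keyS (ℓ m r : ℕ) (h : m + 2 ≤ 2*ℓ) :
    (2*(ℓ:ℝ) - ((m:ℝ)+1)) * bcoef ℓ (m+2) (r+1) + ((m:ℝ)+1) * bcoef ℓ m (r+1)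
      = 2*((ℓ:ℝ) - (r:ℝ)) * bcoef ℓ (m+1) r + 2*((r:ℝ)+2) * bcoef ℓ (m+1) (r+2) := by
  by_cases hpar : r % 2 = (m+1) % 2
  · by_cases hA : r ≤ m + 1
    · by_cases hB : m + 1 + r ≤ 2*ℓ
      · -- main region
        obtain ⟨a, ha⟩ : ∃ a, m + 1 = r + 2*a := ⟨(m+1-r)/2, by omega⟩
        obtain ⟨c, hc⟩ : ∃ c, 2*ℓ = (m+1) + r + 2*c := ⟨(2*ℓ-m-1-r)/2, by omega⟩
        rcases Nat.eq_zero_or_pos a with ha0 | hapos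
        · rcases Nat.eq_zero_or_pos c with hc0 | hcpos
          · -- a = 0, c = 0
            subst ha0; subst hc0
            have hr : r = m + 1 := by omega
            subst hr
            have hl : ℓ = m + 1 := by omega
            subst hl
            rw [bcoef_zero_of_sum (m+1) (m+2) (m+2) (by omega),
                bcoef_zero_of_gt (m+1) m (m+2) (by omega),
                bcoef_zero_of_gt (m+1) (m+1) (m+3) (by omega)]
            push_cast
            ring
          · -- a = 0, c ≥ 1
            subst ha0
            obtain ⟨c', rfl⟩ : ∃ c', c = c' + 1 := ⟨c-1, by omega⟩
            have hr : r = m + 1 := by omega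
            subst hr
            have hl : ℓ = m + 2 + c' := by omega
            subst hl
            rw [bcoef_zero_of_gt (m+2+c') m (m+2) (by omega),
                bcoef_zero_of_gt (m+2+c') (m+1) (m+3) (by omega)]
            rw [bcoef_val (m+2+c') (m+2) (m+2) 0 c' (by omega) (by omega)]
            rw [bcoef_val (m+2+c') (m+1) (m+1) 0 (c'+1) (by omega) (by omega)]
            rw [show (m+2) + 2*0 = m+2 by ring, show (m+2) + 2*c' = (m+1+2*c')+1 by ring,
                show (m+1) + 2*0 = m+1 by ring, show (m+1) + 2*(c'+1) = ((m+1+2*c')+1)+1 by ring]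
            rw [fact1R ((m+1+2*c')+1), fact1R (m+1+2*c'), fact1R c',
                show (m+2 : ℕ) = (m+1)+1 from rfl, fact1R (m+1)]
            rw [show (0:ℕ).factorial = 1 from rfl]
            have n1 := factR_ne (2*(m+2+c'))
            have n2 := factR_ne (m+1)
            have n3 := factR_ne c'
            have n4 := factR_ne (m+1+2*c')
            push_cast
            field_simp
            ring
        · obtain ⟨a', rfl⟩ : ∃ a', a = a' + 1 := ⟨a-1, by omega⟩
          have hm : m = r + 2*a' + 1 := by omega
          subst hm
          rcases Nat.eq_zero_or_pos c with hc0 | hcpos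
          · -- a ≥ 1, c = 0
            subst hc0
            have hl : ℓ = r + a' + 1 := by omega
            subst hl
            rw [bcoef_zero_of_sum (r+a'+1) (r+2*a'+1+2) (r+1) (by omega),
                bcoef_zero_of_sum (r+a'+1) (r+2*a'+1+1) (r+2) (by omega)]
            rw [bcoef_val (r+a'+1) (r+2*a'+1) (r+1) a' 0 (by omega) (by omega)]
            rw [bcoef_val (r+a'+1) (r+2*a'+1+1) r (a'+1) 0 (by omega) (by omega)]
            rw [show (r+1) + 2*a' = (r+2*a')+1 by ring, show (r+1) + 2*0 = r+1 by ring,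
                show r + 2*(a'+1) = ((r+2*a')+1)+1 by ring, show r + 2*0 = r by ring]
            rw [fact1R ((r+2*a')+1), fact1R (r+2*a'), fact1R r, fact1R a']
            rw [show (0:ℕ).factorial = 1 from rfl]
            have n1 := factR_ne (2*(r+a'+1))
            have n2 := factR_ne r
            have n3 := factR_ne a'
            have n4 := factR_ne (r+2*a')
            push_cast
            field_simp
            ring
          · -- interior: a ≥ 1, c ≥ 1
            obtain ⟨c', rfl⟩ : ∃ c', c = c' + 1 := ⟨c-1, by omega⟩
            have hl : ℓ = r + a' + c' + 2 := by omega
            subst hl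
            rw [bcoef_val (r+a'+c'+2) (r+2*a'+1+2) (r+1) (a'+1) c' (by omega) (by omega)]
            rw [bcoef_val (r+a'+c'+2) (r+2*a'+1) (r+1) a' (c'+1) (by omega) (by omega)]
            rw [bcoef_val (r+a'+c'+2) (r+2*a'+1+1) r (a'+1) (c'+1) (by omega) (by omega)]
            rw [bcoef_val (r+a'+c'+2) (r+2*a'+1+1) (r+2) a' c' (by omega) (by omega)]
            rw [show (r+1) + 2*(a'+1) = (((r+2*a')+1)+1)+1 by ring,
                show (r+1) + 2*c' = (r+2*c')+1 by ring,
                show (r+1) + 2*a' = (r+2*a')+1 by ring,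
                show (r+1) + 2*(c'+1) = (((r+2*c')+1)+1)+1 by ring,
                show r + 2*(a'+1) = ((r+2*a')+1)+1 by ring,
                show r + 2*(c'+1) = ((r+2*c')+1)+1 by ring,
                show (r+2) + 2*a' = ((r+2*a')+1)+1 by ring,
                show (r+2) + 2*c' = ((r+2*c')+1)+1 by ring]
            rw [fact1R (((r+2*a')+1)+1), fact1R ((r+2*a')+1), fact1R (r+2*a'),
                fact1R (((r+2*c')+1)+1), fact1R ((r+2*c')+1), fact1R (r+2*c'),
                show (r+2 : ℕ) = (r+1)+1 from rfl, fact1R (r+1), fact1R r,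
                fact1R a', fact1R c']
            have n1 := factR_ne (2*(r+a'+c'+2))
            have n2 := factR_ne r
            have n3 := factR_ne a'
            have n4 := factR_ne c'
            have n5 := factR_ne (r+2*a')
            have n6 := factR_ne (r+2*c')
            push_cast
            field_simp
            ring
      · rw [bcoef_zero_of_sum ℓ (m+2) (r+1) (by omega), bcoef_zero_of_sum ℓ m (r+1) (by omega),
            bcoef_zero_of_sum ℓ (m+1) r (by omega), bcoef_zero_of_sum ℓ (m+1) (r+2) (by omega)]
        ring
    · rw [bcoef_zero_of_gt ℓ (m+2) (r+1) (by omega), bcoef_zero_of_gt ℓ m (r+1) (by omega),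
          bcoef_zero_of_gt ℓ (m+1) r (by omega), bcoef_zero_of_gt ℓ (m+1) (r+2) (by omega)]
      ring
  · rw [bcoef_zero_parity ℓ (m+2) (r+1) (by omega), bcoef_zero_parity ℓ m (r+1) (by omega),
        bcoef_zero_parity ℓ (m+1) r (by omega), bcoef_zero_parity ℓ (m+1) (r+2) (by omega)]
    ring
/-- generating polynomial built from the `bcoef` coefficients -/
noncomputable def Gfun (ℓ k : ℕ) (y : ℝ) : ℝ :=
  ∑ r ∈ Finset.range (2*ℓ+4), bcoef ℓ k r * (1-2*y)^r

lemma binom_sum (ℓ : ℕ) (y : ℝ) :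
    ∑ j ∈ Finset.range (ℓ+1), (ℓ.choose j : ℝ) * y^j * (1-y)^(ℓ-j) = 1 := by
  have h := add_pow (R := ℝ) y (1-y) ℓ
  have h2 : (y + (1-y))^ℓ = 1 := by norm_num
  rw [h2] at h
  conv_rhs => rw [h]
  apply Finset.sum_congr rfl
  intro j _
  ring

lemma binom_mean (ℓ : ℕ) (hℓ : 1 ≤ ℓ) (y : ℝ) :
    ∑ j ∈ Finset.range (ℓ+1), (j:ℝ) * (ℓ.choose j : ℝ) * y^j * (1-y)^(ℓ-j) = ℓ * y := by
  obtain ⟨L, rfl⟩ : ∃ L, ℓ = L + 1 := ⟨ℓ-1, by omega⟩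
  rw [Finset.sum_range_succ' _ (L+1)]
  simp only [Nat.cast_zero, zero_mul, pow_zero, add_zero, mul_zero, zero_mul]
  have step : ∀ j ∈ Finset.range (L+1),
      ((j:ℝ)+1) * ((L+1).choose (j+1) : ℝ) * y^(j+1) * (1-y)^(L+1-(j+1))
      = ((L:ℝ)+1) * y * ((L.choose j : ℝ) * y^j * (1-y)^(L-j)) := by
    intro j hj
    have hcc : (L+1) * (L.choose j) = ((L+1).choose (j+1)) * (j+1) := Nat.add_one_mul_choose_eq L j
    have hccR : ((L:ℝ)+1) * (L.choose j : ℝ) = ((L+1).choose (j+1) : ℝ) * ((j:ℝ)+1) := by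
      exact_mod_cast congrArg (Nat.cast : ℕ → ℝ) hcc
    have he : L+1-(j+1) = L - j := by omega
    rw [he]
    calc ((j:ℝ)+1) * ((L+1).choose (j+1) : ℝ) * y^(j+1) * (1-y)^(L-j)
        = (((L+1).choose (j+1) : ℝ) * ((j:ℝ)+1)) * y^(j+1) * (1-y)^(L-j) := by ring
      _ = (((L:ℝ)+1) * (L.choose j : ℝ)) * y^(j+1) * (1-y)^(L-j) := by rw [← hccR]
      _ = ((L:ℝ)+1) * y * ((L.choose j : ℝ) * y^j * (1-y)^(L-j)) := by rw [pow_succ]; ring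
  rw [Finset.sum_congr rfl (by exact_mod_cast step), ← Finset.mul_sum, binom_sum L y]
  push_cast
  ring

lemma Scol_zero (ℓ : ℕ) (y : ℝ) : Scol ℓ 0 y = 1 := by
  rw [Scol_eq]
  have : ∀ j ∈ Finset.range (ℓ+1),
      (ℓ.choose j : ℝ) * y^j * (1-y)^(ℓ-j) * kraw (2*ℓ) (2*j) ((0:ℕ):ℝ)
      = (ℓ.choose j : ℝ) * y^j * (1-y)^(ℓ-j) := by
    intro j _
    rw [show ((0:ℕ):ℝ) = 0 by norm_num, kraw_zero, mul_one]
  rw [Finset.sum_congr rfl this, binom_sum]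

lemma Scol_one (ℓ : ℕ) (hℓ : 1 ≤ ℓ) (y : ℝ) : Scol ℓ 1 y = 1 - 2*y := by
  rw [Scol_eq]
  have hN : 0 < 2*ℓ := by omega
  have hl0 : ((ℓ:ℝ)) ≠ 0 := by positivity
  have : ∀ j ∈ Finset.range (ℓ+1),
      (ℓ.choose j : ℝ) * y^j * (1-y)^(ℓ-j) * kraw (2*ℓ) (2*j) ((1:ℕ):ℝ)
      = (ℓ.choose j : ℝ) * y^j * (1-y)^(ℓ-j)
        - (2/(ℓ:ℝ)) * ((j:ℝ) * (ℓ.choose j : ℝ) * y^j * (1-y)^(ℓ-j)) := by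
    intro j _
    rw [show ((1:ℕ):ℝ) = 1 by norm_num, kraw_one (2*ℓ) (2*j) hN]
    push_cast
    field_simp
  rw [Finset.sum_congr rfl this, Finset.sum_sub_distrib, binom_sum, ← Finset.mul_sum,
      binom_mean ℓ hℓ]
  field_simp

lemma Gfun_zero (ℓ : ℕ) (y : ℝ) : Gfun ℓ 0 y = 1 := by
  rw [Gfun, Finset.sum_eq_single 0]
  · rw [bcoef_val ℓ 0 0 0 ℓ (by omega) (by omega)]
    simp only [pow_zero, Nat.factorial_zero, mul_one]
    rw [show 0 + 2*ℓ = 2*ℓ by ring]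
    have n1 := factR_ne (2*ℓ)
    have n2 := factR_ne ℓ
    push_cast
    field_simp
    ring
  · intro r _ hr
    rw [bcoef_zero_of_gt ℓ 0 r (by omega)]
    ring
  · intro hc
    simp at hc

lemma Gfun_one (ℓ : ℕ) (hℓ : 1 ≤ ℓ) (y : ℝ) : Gfun ℓ 1 y = 1 - 2*y := by
  obtain ⟨L, rfl⟩ : ∃ L, ℓ = L + 1 := ⟨ℓ-1, by omega⟩
  rw [Gfun, Finset.sum_eq_single 1]
  · rw [bcoef_val (L+1) 1 1 0 L (by omega) (by omega)]
    rw [show 1 + 2*0 = 1 by ring, show 1+2*L = 2*L+1 by ring]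
    rw [show (2*(L+1)) = (2*L+1)+1 by ring]
    rw [fact1R (2*L+1), fact1R L, show (1:ℕ).factorial = 1 from rfl,
        show (0:ℕ).factorial = 1 from rfl]
    have n1 := factR_ne (2*L+1)
    have n2 := factR_ne L
    push_cast
    field_simp
    ring
  · intro r _ hr
    rcases Nat.lt_or_ge r 2 with h2 | h2
    · interval_cases r
      · rw [bcoef_zero_parity (L+1) 1 0 (by omega)]; ring
      · omega
    · rw [bcoef_zero_of_gt (L+1) 1 r (by omega)]; ring
  · intro hc
    simp at hc
lemma hasDeriv_term (ℓ j : ℕ) (y : ℝ) :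
    HasDerivAt (fun z : ℝ => z^j * (1-z)^(ℓ-j))
      ((j:ℝ)*y^(j-1) * (1-y)^(ℓ-j) + y^j * (((ℓ-j : ℕ):ℝ) * (1-y)^(ℓ-j-1) * (-1))) y := by
  have h1 : HasDerivAt (fun z : ℝ => z^j) ((j:ℝ)*y^(j-1)) y := hasDerivAt_pow j y
  have hin : HasDerivAt (fun z : ℝ => 1 - z) (-1) y := (hasDerivAt_id y).const_sub 1
  have h2 : HasDerivAt (fun z : ℝ => (1-z)^(ℓ-j))
      (((ℓ-j:ℕ):ℝ)*(1-y)^(ℓ-j-1) * (-1)) y := by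
    have := (hasDerivAt_pow (ℓ-j) (1-y)).comp y hin
    simpa [Function.comp_def] using this
  exact h1.mul h2

lemma term_ident (ℓ j : ℕ) (hj : j ≤ ℓ) (y : ℝ) :
    (2*(ℓ:ℝ) - 4*(j:ℝ)) * (y^j * (1-y)^(ℓ-j))
      = 2*(ℓ:ℝ)*(1-2*y) * (y^j * (1-y)^(ℓ-j))
        - 4*y*(1-y) * ((j:ℝ)*y^(j-1) * (1-y)^(ℓ-j)
            + y^j * (((ℓ-j : ℕ):ℝ) * (1-y)^(ℓ-j-1) * (-1))) := by
  rcases Nat.eq_zero_or_pos j with rfl | hj0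
  · rcases Nat.eq_zero_or_pos ℓ with rfl | hl0
    · norm_num
    · obtain ⟨t, rfl⟩ : ∃ t, ℓ = t+1 := ⟨ℓ-1, by omega⟩
      rw [show t+1-0-1 = t by omega, show t+1-0 = t+1 by omega, show (0:ℕ)-1 = 0 by omega]
      push_cast
      rw [pow_succ]
      ring
  · obtain ⟨j', rfl⟩ : ∃ j', j = j'+1 := ⟨j-1, by omega⟩
    rcases Nat.eq_zero_or_pos (ℓ-(j'+1)) with hz | hpos
    · have hlj : ℓ = j'+1 := by omega
      subst hlj
      rw [show j'+1-(j'+1)-1 = 0 by omega, show j'+1-(j'+1) = 0 by omega,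
          show j'+1-1 = j' by omega]
      push_cast
      rw [pow_succ]
      ring
    · obtain ⟨t, rfl⟩ : ∃ t, ℓ = (j'+1)+(t+1) := ⟨ℓ-j'-2, by omega⟩
      rw [show (j'+1)+(t+1)-(j'+1)-1 = t by omega, show (j'+1)+(t+1)-(j'+1) = t+1 by omega,
          show j'+1-1 = j' by omega]
      push_cast
      rw [pow_succ y j', pow_succ (1-y) t]
      ring

lemma Scol_hasDeriv (ℓ k : ℕ) (y : ℝ) :
    HasDerivAt (fun z => Scol ℓ k z)
      (∑ j ∈ Finset.range (ℓ+1), (ℓ.choose j : ℝ) *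
        ((j:ℝ)*y^(j-1) * (1-y)^(ℓ-j) + y^j * (((ℓ-j : ℕ):ℝ) * (1-y)^(ℓ-j-1) * (-1))) *
        kraw (2*ℓ) (2*j) (k:ℝ)) y := by
  have hfe : (fun z => Scol ℓ k z) = (fun z => ∑ j ∈ Finset.range (ℓ+1),
      (ℓ.choose j : ℝ) * (z^j*(1-z)^(ℓ-j)) * kraw (2*ℓ) (2*j) (k:ℝ)) := by
    funext z
    rw [Scol_eq]
    apply Finset.sum_congr rfl
    intro j _
    ring
  rw [hfe]
  apply HasDerivAt.fun_sum
  intro j _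
  have := ((hasDeriv_term ℓ j y).const_mul ((ℓ.choose j : ℝ))).mul_const
    (kraw (2*ℓ) (2*j) (k:ℝ))
  simpa [mul_assoc] using this

lemma Scol_rec (ℓ : ℕ) (m : ℕ) (y : ℝ) :
    (2*(ℓ:ℝ) - ((m:ℝ)+1)) * Scol ℓ (m+2) y + ((m:ℝ)+1) * Scol ℓ m y
      = 2*(ℓ:ℝ)*(1-2*y) * Scol ℓ (m+1) y
        - 4*y*(1-y) * (∑ j ∈ Finset.range (ℓ+1), (ℓ.choose j : ℝ) *
            ((j:ℝ)*y^(j-1) * (1-y)^(ℓ-j) + y^j * (((ℓ-j : ℕ):ℝ) * (1-y)^(ℓ-j-1) * (-1))) *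
            kraw (2*ℓ) (2*j) ((m+1 : ℕ):ℝ)) := by
  rw [Scol_eq, Scol_eq, Scol_eq]
  rw [Finset.mul_sum, Finset.mul_sum, Finset.mul_sum, Finset.mul_sum]
  rw [← Finset.sum_add_distrib, ← Finset.sum_sub_distrib]
  apply Finset.sum_congr rfl
  intro j hj
  have hjl : j ≤ ℓ := by simpa [Nat.lt_succ_iff] using hj
  have hdiff := kraw_diff (2*ℓ) (2*j) (by omega) ((m+1 : ℕ):ℝ)
  have e₂ : ((m+2:ℕ):ℝ) = ((m+1:ℕ):ℝ) + 1 := by push_cast; ring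
  have e₀ : ((m:ℕ):ℝ) = ((m+1:ℕ):ℝ) - 1 := by push_cast; ring
  have hmc : ((m+1:ℕ):ℝ) = (m:ℝ)+1 := by push_cast; ring
  rw [e₂, e₀, hmc]
  have hterm := term_ident ℓ j hjl y
  have hNc : ((2*ℓ:ℕ):ℝ) = 2*(ℓ:ℝ) := by push_cast; ring
  rw [hmc, hNc] at hdiff
  have hjc : 2*((2*j:ℕ):ℝ) = 4*(j:ℝ) := by push_cast; ring
  rw [hjc] at hdiff
  linear_combination ((ℓ.choose j : ℝ) * y^j * (1-y)^(ℓ-j)) * hdiff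
    + ((ℓ.choose j : ℝ) * kraw (2*ℓ) (2*j) ((m:ℝ)+1)) * hterm

lemma Gfun_hasDeriv (ℓ k : ℕ) (y : ℝ) :
    HasDerivAt (fun z => Gfun ℓ k z)
      (∑ r ∈ Finset.range (2*ℓ+4), bcoef ℓ k r * ((r:ℝ) * (1-2*y)^(r-1) * (-2))) y := by
  unfold Gfun
  apply HasDerivAt.fun_sum
  intro r _
  have hin : HasDerivAt (fun z : ℝ => 1 - 2*z) (-2) y := by
    have := ((hasDerivAt_id y).const_mul (2:ℝ)).const_sub 1
    simpa using this
  have hp : HasDerivAt (fun z : ℝ => (1-2*z)^r) ((r:ℝ) * (1-2*y)^(r-1) * (-2)) y := by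
    have := (hasDerivAt_pow r (1-2*y)).comp y hin
    simpa [Function.comp_def] using this
  exact hp.const_mul (bcoef ℓ k r)
lemma Gsum_claim (ℓ m : ℕ) (h : m+2 ≤ 2*ℓ) (u : ℝ) :
    ∑ r ∈ Finset.range (2*ℓ+4),
        ((2*(ℓ:ℝ)-((m:ℝ)+1)) * bcoef ℓ (m+2) r + ((m:ℝ)+1) * bcoef ℓ m r) * u^r
      = ∑ r ∈ Finset.range (2*ℓ+4), 2*((ℓ:ℝ)-(r:ℝ)) * bcoef ℓ (m+1) r * u^(r+1)
        + ∑ r ∈ Finset.range (2*ℓ+4), 2*((r:ℝ)) * bcoef ℓ (m+1) r * u^(r-1) := by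
  -- right-hand side, second sum: shift index down by one
  have hR2 : ∑ r ∈ Finset.range (2*ℓ+4), 2*((r:ℝ)) * bcoef ℓ (m+1) r * u^(r-1)
      = ∑ r ∈ Finset.range (2*ℓ+3), 2*((r:ℝ)+1) * bcoef ℓ (m+1) (r+1) * u^r := by
    rw [Finset.sum_range_succ' (fun r => 2*((r:ℝ)) * bcoef ℓ (m+1) r * u^(r-1)) (2*ℓ+3)]
    have hz : 2*((0:ℕ):ℝ) * bcoef ℓ (m+1) 0 * u^(0-1) = 0 := by norm_num
    rw [hz, add_zero]
    apply Finset.sum_congr rfl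
    intro r _
    rw [show r+1-1 = r by omega]
    push_cast
    ring
  -- and again: peel its first term
  have hR2' : ∑ r ∈ Finset.range (2*ℓ+3), 2*((r:ℝ)+1) * bcoef ℓ (m+1) (r+1) * u^r
      = (∑ r ∈ Finset.range (2*ℓ+2), 2*((r:ℝ)+2) * bcoef ℓ (m+1) (r+2) * u^(r+1))
        + 2 * bcoef ℓ (m+1) 1 := by
    rw [Finset.sum_range_succ' (fun r => 2*((r:ℝ)+1) * bcoef ℓ (m+1) (r+1) * u^r) (2*ℓ+2)]
    norm_num
    apply Finset.sum_congr rfl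
    intro r _
    ring
  -- right-hand side, first sum: top term vanishes
  have hR1 : ∑ r ∈ Finset.range (2*ℓ+4), 2*((ℓ:ℝ)-(r:ℝ)) * bcoef ℓ (m+1) r * u^(r+1)
      = ∑ r ∈ Finset.range (2*ℓ+3), 2*((ℓ:ℝ)-(r:ℝ)) * bcoef ℓ (m+1) r * u^(r+1) := by
    rw [Finset.sum_range_succ (fun r => 2*((ℓ:ℝ)-(r:ℝ)) * bcoef ℓ (m+1) r * u^(r+1)) (2*ℓ+3)]
    rw [bcoef_zero_of_sum ℓ (m+1) (2*ℓ+3) (by omega)]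
    ring
  -- left-hand side: peel first term, shift, and apply the key identities
  rw [Finset.sum_range_succ'
    (fun r => ((2*(ℓ:ℝ)-((m:ℝ)+1)) * bcoef ℓ (m+2) r + ((m:ℝ)+1) * bcoef ℓ m r) * u^r) (2*ℓ+3)]
  have hL : ∀ r ∈ Finset.range (2*ℓ+3),
      ((2*(ℓ:ℝ)-((m:ℝ)+1)) * bcoef ℓ (m+2) (r+1) + ((m:ℝ)+1) * bcoef ℓ m (r+1)) * u^(r+1)
      = 2*((ℓ:ℝ)-(r:ℝ)) * bcoef ℓ (m+1) r * u^(r+1)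
        + 2*((r:ℝ)+2) * bcoef ℓ (m+1) (r+2) * u^(r+1) := by
    intro r _
    have := keyS ℓ m r h
    calc ((2*(ℓ:ℝ)-((m:ℝ)+1)) * bcoef ℓ (m+2) (r+1) + ((m:ℝ)+1) * bcoef ℓ m (r+1)) * u^(r+1)
        = (2*((ℓ:ℝ) - (r:ℝ)) * bcoef ℓ (m+1) r + 2*((r:ℝ)+2) * bcoef ℓ (m+1) (r+2)) * u^(r+1) := by
          rw [← this]
      _ = 2*((ℓ:ℝ)-(r:ℝ)) * bcoef ℓ (m+1) r * u^(r+1)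
            + 2*((r:ℝ)+2) * bcoef ℓ (m+1) (r+2) * u^(r+1) := by ring
  rw [Finset.sum_congr rfl hL, Finset.sum_add_distrib]
  have hL0 : ((2*(ℓ:ℝ)-((m:ℝ)+1)) * bcoef ℓ (m+2) 0 + ((m:ℝ)+1) * bcoef ℓ m 0) * u^0
      = 2 * bcoef ℓ (m+1) 1 := by
    rw [pow_zero, mul_one]
    exact key0 ℓ m h
  rw [hL0]
  -- second LHS block: trim its top term
  have hL2 : ∑ r ∈ Finset.range (2*ℓ+3), 2*((r:ℝ)+2) * bcoef ℓ (m+1) (r+2) * u^(r+1)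
      = ∑ r ∈ Finset.range (2*ℓ+2), 2*((r:ℝ)+2) * bcoef ℓ (m+1) (r+2) * u^(r+1) := by
    rw [Finset.sum_range_succ (fun r => 2*((r:ℝ)+2) * bcoef ℓ (m+1) (r+2) * u^(r+1)) (2*ℓ+2)]
    rw [bcoef_zero_of_sum ℓ (m+1) (2*ℓ+2+2) (by omega)]
    ring
  rw [hL2, hR1, hR2, hR2']
  ring

lemma Gfun_rec (ℓ m : ℕ) (h : m+2 ≤ 2*ℓ) (y : ℝ) :
    2*(ℓ:ℝ)*(1-2*y) * Gfun ℓ (m+1) y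
      - 4*y*(1-y) * (∑ r ∈ Finset.range (2*ℓ+4), bcoef ℓ (m+1) r * ((r:ℝ)*(1-2*y)^(r-1)*(-2)))
      - ((m:ℝ)+1) * Gfun ℓ m y
    = (2*(ℓ:ℝ) - ((m:ℝ)+1)) * Gfun ℓ (m+2) y := by
  unfold Gfun
  set u : ℝ := 1-2*y with hu
  have e1 : 2*(ℓ:ℝ)*u * (∑ r ∈ Finset.range (2*ℓ+4), bcoef ℓ (m+1) r * u^r)
      = ∑ r ∈ Finset.range (2*ℓ+4), 2*(ℓ:ℝ) * bcoef ℓ (m+1) r * u^(r+1) := by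
    rw [Finset.mul_sum]
    apply Finset.sum_congr rfl
    intro r _
    rw [pow_succ]
    ring
  have e2 : (4*y*(1-y)) * (∑ r ∈ Finset.range (2*ℓ+4), bcoef ℓ (m+1) r * ((r:ℝ)*u^(r-1)*(-2)))
      = ∑ r ∈ Finset.range (2*ℓ+4),
          (2*(r:ℝ) * bcoef ℓ (m+1) r * u^(r+1) - 2*(r:ℝ) * bcoef ℓ (m+1) r * u^(r-1)) := by
    have h4 : 4*y*(1-y) = 1-u^2 := by rw [hu]; ring
    rw [h4, Finset.mul_sum]
    apply Finset.sum_congr rfl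
    intro r _
    rcases Nat.eq_zero_or_pos r with rfl | hr
    · norm_num
    · obtain ⟨r', rfl⟩ : ∃ r', r = r'+1 := ⟨r-1, by omega⟩
      rw [show r'+1-1 = r' by omega]
      push_cast
      rw [pow_succ u (r'+1), pow_succ u r']
      ring
  have e3 : ((m:ℝ)+1) * (∑ r ∈ Finset.range (2*ℓ+4), bcoef ℓ m r * u^r)
      = ∑ r ∈ Finset.range (2*ℓ+4), ((m:ℝ)+1) * bcoef ℓ m r * u^r := by
    rw [Finset.mul_sum]; apply Finset.sum_congr rfl; intro r _; ring
  have e4 : (2*(ℓ:ℝ) - ((m:ℝ)+1)) * (∑ r ∈ Finset.range (2*ℓ+4), bcoef ℓ (m+2) r * u^r)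
      = ∑ r ∈ Finset.range (2*ℓ+4), (2*(ℓ:ℝ) - ((m:ℝ)+1)) * bcoef ℓ (m+2) r * u^r := by
    rw [Finset.mul_sum]; apply Finset.sum_congr rfl; intro r _; ring
  rw [e1, e2, e3, e4]
  have claim := Gsum_claim ℓ m h u
  have expand : ∀ r ∈ Finset.range (2*ℓ+4),
      ((2*(ℓ:ℝ)-((m:ℝ)+1)) * bcoef ℓ (m+2) r + ((m:ℝ)+1) * bcoef ℓ m r) * u^r
      = (2*(ℓ:ℝ)-((m:ℝ)+1)) * bcoef ℓ (m+2) r * u^r + ((m:ℝ)+1) * bcoef ℓ m r * u^r := by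
    intro r _; ring
  rw [Finset.sum_congr rfl expand, Finset.sum_add_distrib] at claim
  have split1 : ∀ r ∈ Finset.range (2*ℓ+4),
      2*((ℓ:ℝ)-(r:ℝ)) * bcoef ℓ (m+1) r * u^(r+1)
      = 2*(ℓ:ℝ) * bcoef ℓ (m+1) r * u^(r+1) - 2*(r:ℝ) * bcoef ℓ (m+1) r * u^(r+1) := by
    intro r _; ring
  rw [Finset.sum_congr rfl split1, Finset.sum_sub_distrib] at claim
  rw [Finset.sum_sub_distrib]
  linarith [claim]

lemma Scol_eq_Gfun (ℓ : ℕ) (hℓ : 1 ≤ ℓ) :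
    ∀ k, k ≤ 2*ℓ → ∀ y : ℝ, Scol ℓ k y = Gfun ℓ k y := by
  intro k
  induction k using Nat.strong_induction_on with
  | _ k ih =>
    rcases k with _ | k'
    · intro _ y; rw [Scol_zero, Gfun_zero]
    · rcases k' with _ | m
      · intro _ y; rw [Scol_one ℓ hℓ y, Gfun_one ℓ hℓ y]
      · intro hk y
        have ih1 := ih (m+1) (by omega) (by omega)
        have ih0 := ih m (by omega) (by omega)
        have hS := Scol_hasDeriv ℓ (m+1) y
        have hfun : (fun z => Scol ℓ (m+1) z) = (fun z => Gfun ℓ (m+1) z) :=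
          funext (fun z => ih1 z)
        rw [hfun] at hS
        have hG := Gfun_hasDeriv ℓ (m+1) y
        have hDeq := hS.unique hG
        have hrec := Scol_rec ℓ m y
        rw [ih1 y, ih0 y, hDeq] at hrec
        have hGr := Gfun_rec ℓ m (by omega) y
        have hcan : (2*(ℓ:ℝ) - ((m:ℝ)+1)) ≠ 0 := by
          have h2 : (m:ℝ) + 2 ≤ 2*(ℓ:ℝ) := by exact_mod_cast hk
          intro hc; linarith
        apply mul_left_cancel₀ hcan
        linear_combination hrec + hGr
lemma sum_range_even_odd (n : ℕ) (f : ℕ → ℝ) :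
    ∑ r ∈ Finset.range (2*n), f r = ∑ j ∈ Finset.range n, (f (2*j) + f (2*j+1)) := by
  induction n with
  | zero => simp
  | succ n ih =>
    rw [show 2*(n+1) = (2*n+1)+1 by ring, Finset.sum_range_succ, Finset.sum_range_succ, ih,
        Finset.sum_range_succ]
    ring

lemma Gfun_even (ℓ k : ℕ) (hk : k % 2 = 0) (y : ℝ) :
    Gfun ℓ k y = ∑ j ∈ Finset.range (ℓ+1), bcoef ℓ k (2*j) * (1-2*y)^(2*j) := by
  rw [Gfun, show 2*ℓ+4 = 2*(ℓ+2) by ring,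
      sum_range_even_odd (ℓ+2) (fun r => bcoef ℓ k r * (1-2*y)^r)]
  have hodd : ∀ j ∈ Finset.range (ℓ+2),
      (bcoef ℓ k (2*j) * (1-2*y)^(2*j) + bcoef ℓ k (2*j+1) * (1-2*y)^(2*j+1))
      = bcoef ℓ k (2*j) * (1-2*y)^(2*j) := by
    intro j _
    rw [bcoef_zero_parity ℓ k (2*j+1) (by omega)]
    ring
  rw [Finset.sum_congr rfl hodd,
      Finset.sum_range_succ (fun j => bcoef ℓ k (2*j) * (1-2*y)^(2*j)) (ℓ+1),
      bcoef_zero_of_sum ℓ k (2*(ℓ+1)) (by omega)]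
  ring

lemma Gfun_odd (ℓ k : ℕ) (hk : k % 2 = 1) (y : ℝ) :
    Gfun ℓ k y = (1-2*y) * ∑ j ∈ Finset.range (ℓ+1), bcoef ℓ k (2*j+1) * (1-2*y)^(2*j) := by
  rw [Gfun, show 2*ℓ+4 = 2*(ℓ+2) by ring,
      sum_range_even_odd (ℓ+2) (fun r => bcoef ℓ k r * (1-2*y)^r)]
  have heven : ∀ j ∈ Finset.range (ℓ+2),
      (bcoef ℓ k (2*j) * (1-2*y)^(2*j) + bcoef ℓ k (2*j+1) * (1-2*y)^(2*j+1))
      = bcoef ℓ k (2*j+1) * (1-2*y)^(2*j+1) := by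
    intro j _
    rw [bcoef_zero_parity ℓ k (2*j) (by omega)]
    ring
  rw [Finset.sum_congr rfl heven,
      Finset.sum_range_succ (fun j => bcoef ℓ k (2*j+1) * (1-2*y)^(2*j+1)) (ℓ+1),
      bcoef_zero_of_sum ℓ k (2*(ℓ+1)+1) (by omega), Finset.mul_sum]
  have : ∀ j ∈ Finset.range (ℓ+1),
      bcoef ℓ k (2*j+1) * (1-2*y)^(2*j+1)
      = (1-2*y) * (bcoef ℓ k (2*j+1) * (1-2*y)^(2*j)) := by
    intro j _
    rw [pow_succ]
    ring
  rw [Finset.sum_congr rfl this]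
  ring

/-- in the basis `{(1-2y)^j}` the polynomial `S_k` has nonnegative coefficients
(for `k` even it is a polynomial in `(1-2y)²` with nonnegative coefficients; for `k` odd it is
`(1-2y)` times such a polynomial); consequently the ratio `S_{k+1}/S_k` is nonnegative on
`[0,1/2)` and nonpositive on `(1/2,1]`. -/
theorem Scol_sign_structure (ℓ : ℕ) (hℓ : 1 ≤ ℓ) :
    (∀ k ≤ 2 * ℓ, ∃ α : ℕ → ℝ, (∀ j, 0 ≤ α j) ∧
      (Even k → ∀ y : ℝ, Scol ℓ k y = ∑ j ∈ Finset.range (ℓ + 1), α j * (1 - 2 * y) ^ (2 * j)) ∧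
      (Odd k → ∀ y : ℝ,
        Scol ℓ k y = (1 - 2 * y) * ∑ j ∈ Finset.range (ℓ + 1), α j * (1 - 2 * y) ^ (2 * j))) ∧
    (∀ k, k ≤ 2 * ℓ - 1 → ∀ y : ℝ,
      (y ∈ Set.Ico (0 : ℝ) (1 / 2) → 0 ≤ Scol ℓ (k + 1) y / Scol ℓ k y) ∧
      (y ∈ Set.Ioc (1 / 2 : ℝ) 1 → Scol ℓ (k + 1) y / Scol ℓ k y ≤ 0)) := by
  have hpart1 : ∀ k ≤ 2 * ℓ, ∃ α : ℕ → ℝ, (∀ j, 0 ≤ α j) ∧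
      (Even k → ∀ y : ℝ, Scol ℓ k y = ∑ j ∈ Finset.range (ℓ + 1), α j * (1 - 2 * y) ^ (2 * j)) ∧
      (Odd k → ∀ y : ℝ,
        Scol ℓ k y = (1 - 2 * y) * ∑ j ∈ Finset.range (ℓ + 1), α j * (1 - 2 * y) ^ (2 * j)) := by
    intro k hk
    refine ⟨fun j => if k % 2 = 0 then bcoef ℓ k (2*j) else bcoef ℓ k (2*j+1), ?_, ?_, ?_⟩
    · intro j
      split <;> exact bcoef_nonneg _ _ _
    · intro he y
      have hk2 : k % 2 = 0 := Nat.even_iff.mp he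
      simp only [if_pos hk2]
      rw [Scol_eq_Gfun ℓ hℓ k hk y, Gfun_even ℓ k hk2 y]
    · intro ho y
      have hk2 : k % 2 = 1 := Nat.odd_iff.mp ho
      simp only [hk2]
      norm_num
      rw [Scol_eq_Gfun ℓ hℓ k hk y, Gfun_odd ℓ k hk2 y]
  refine ⟨hpart1, ?_⟩
  intro k hk y
  have hk1 : k ≤ 2*ℓ := by omega
  have hk2 : k+1 ≤ 2*ℓ := by omega
  obtain ⟨α, hαpos, hαe, hαo⟩ := hpart1 k hk1
  obtain ⟨β, hβpos, hβe, hβo⟩ := hpart1 (k+1) hk2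
  have hA : 0 ≤ ∑ j ∈ Finset.range (ℓ+1), α j * (1 - 2*y)^(2*j) := by
    apply Finset.sum_nonneg
    intro j _
    apply mul_nonneg (hαpos j)
    rw [pow_mul]
    exact pow_nonneg (sq_nonneg _) j
  have hB : 0 ≤ ∑ j ∈ Finset.range (ℓ+1), β j * (1 - 2*y)^(2*j) := by
    apply Finset.sum_nonneg
    intro j _
    apply mul_nonneg (hβpos j)
    rw [pow_mul]
    exact pow_nonneg (sq_nonneg _) j
  rcases Nat.even_or_odd k with he | ho
  · have hSk := hαe he y
    have hSk1 := hβo (Even.add_one he) y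
    constructor
    · rintro ⟨hy0, hy1⟩
      have hu : 0 ≤ 1 - 2*y := by linarith
      rw [hSk, hSk1]
      exact div_nonneg (mul_nonneg hu hB) hA
    · rintro ⟨hy0, hy1⟩
      have hu : 1 - 2*y ≤ 0 := by linarith
      rw [hSk, hSk1]
      apply div_nonpos_iff.mpr
      right
      exact ⟨mul_nonpos_of_nonpos_of_nonneg hu hB, hA⟩
  · have hSk := hαo ho y
    have hSk1 := hβe (Odd.add_one ho) y
    constructor
    · rintro ⟨hy0, hy1⟩
      have hu : 0 ≤ 1 - 2*y := by linarith
      rw [hSk, hSk1]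
      exact div_nonneg hB (mul_nonneg hu hA)
    · rintro ⟨hy0, hy1⟩
      have hu : 1 - 2*y ≤ 0 := by linarith
      rw [hSk, hSk1]
      apply div_nonpos_iff.mpr
      left
      exact ⟨hB, mul_nonpos_of_nonpos_of_nonneg hu hA⟩
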